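/- Let A ∈ ℂ^{n×n} be nonsingular and completely pivoted with pivots p_1,...,p_n. Then for every k = 1,...,n, ∏_{i=1}^k p_i ≤ k^{k/2} · p_k^k. -/

import Mathlib

open Matrix BigOperators

/-- The Gaussian elimination iterate `A^(k)`: the Schur complement of the
leading `(n-k) × (n-k)` block of `A`. -/
noncomputable def geIter (n : ℕ) (A : Matrix (Fin n) (Fin n) ℂ) (k : ℕ) (hk : k ≤ n) :
    Matrix (Fin k) (Fin k) ℂ :=
  let f : Fin k → Fin n := fun i => ⟨n - k + i.val, by have := i.isLt; omega⟩
  let g : Fin (n - k) → Fin n := fun j => ⟨j.val, by have := j.isLt; omega⟩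
  A.submatrix f f - A.submatrix f g * (A.submatrix g g)⁻¹ * A.submatrix g f

/-- The `k`-th pivot `p_k = |(A^(k))_{1,1}|` (and `0` if `k = 0` or `k > n`). -/
noncomputable def pivot (n : ℕ) (A : Matrix (Fin n) (Fin n) ℂ) (k : ℕ) : ℝ :=
  if h : 0 < k ∧ k ≤ n then ‖geIter n A k h.2 ⟨0, h.1⟩ ⟨0, h.1⟩‖ else 0

/-- `‖M‖_max`, the maximum modulus of an entry of `M`. -/
noncomputable def maxEntry {k : ℕ} (M : Matrix (Fin k) (Fin k) ℂ) : ℝ :=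
  ⨆ i : Fin k, ⨆ j : Fin k, ‖M i j‖

/-- `A` is completely pivoted: for every `k = 1, ..., n`, the pivot `p_k`
equals the maximum modulus of an entry of `A^(k)`. -/
def CompletelyPivoted (n : ℕ) (A : Matrix (Fin n) (Fin n) ℂ) : Prop :=
  ∀ (k : ℕ) (h1 : 0 < k) (h2 : k ≤ n), pivot n A k = maxEntry (geIter n A k h2)

/-- All leading principal minors of `A` are nonzero (with `m = n` this says
`A` itself is nonsingular). -/
def LeadingMinorsNonzero (n : ℕ) (A : Matrix (Fin n) (Fin n) ℂ) : Prop :=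
  ∀ (m : ℕ) (hm : m ≤ n), (A.submatrix (Fin.castLE hm) (Fin.castLE hm)).det ≠ 0

/-! ### Auxiliary definitions and lemmas -/

open scoped ComplexOrder

def fIdx (n k : ℕ) (hk : k ≤ n) : Fin k → Fin n :=
  fun i => ⟨n - k + i.val, by have := i.isLt; omega⟩

def gIdx (n k : ℕ) : Fin (n - k) → Fin n :=
  fun j => ⟨j.val, by have := j.isLt; omega⟩

lemma geIter_eq (n : ℕ) (A : Matrix (Fin n) (Fin n) ℂ) (k : ℕ) (hk : k ≤ n) :
    geIter n A k hk = A.submatrix (fIdx n k hk) (fIdx n k hk) -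
      A.submatrix (fIdx n k hk) (gIdx n k) * (A.submatrix (gIdx n k) (gIdx n k))⁻¹ *
        A.submatrix (gIdx n k) (fIdx n k hk) := rfl

lemma schur_det (n k : ℕ) (hk : k ≤ n) (A : Matrix (Fin n) (Fin n) ℂ)
    (h : (A.submatrix (gIdx n k) (gIdx n k)).det ≠ 0) :
    (geIter n A k hk).det * (A.submatrix (gIdx n k) (gIdx n k)).det = A.det := by
  let e : Fin (n - k) ⊕ Fin k ≃ Fin n := finSumFinEquiv.trans (finCongr (Nat.sub_add_cancel hk))
  have hA : A.submatrix e e = Matrix.fromBlocks (A.submatrix (gIdx n k) (gIdx n k))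
      (A.submatrix (gIdx n k) (fIdx n k hk)) (A.submatrix (fIdx n k hk) (gIdx n k))
      (A.submatrix (fIdx n k hk) (fIdx n k hk)) := by
    ext i j
    cases i <;> cases j <;> rfl
  have hinv : Invertible (A.submatrix (gIdx n k) (gIdx n k)) :=
    (A.submatrix (gIdx n k) (gIdx n k)).invertibleOfIsUnitDet (isUnit_iff_ne_zero.mpr h)
  have hdet : A.det = (A.submatrix (gIdx n k) (gIdx n k)).det *
      ((A.submatrix (fIdx n k hk) (fIdx n k hk)) -
        (A.submatrix (fIdx n k hk) (gIdx n k)) * ⅟(A.submatrix (gIdx n k) (gIdx n k)) *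
          (A.submatrix (gIdx n k) (fIdx n k hk))).det := by
    rw [← Matrix.det_submatrix_equiv_self e, hA, Matrix.det_fromBlocks₁₁]
  rw [invOf_eq_nonsing_inv] at hdet
  rw [hdet, ← geIter_eq, mul_comm]

lemma geIter_loc (n : ℕ) (A : Matrix (Fin n) (Fin n) ℂ) (k : ℕ) (h1 : 0 < k) (hk : k ≤ n)
    (hm : n - k + 1 ≤ n) :
    geIter n A k hk ⟨0, h1⟩ ⟨0, h1⟩ =
      geIter (n - k + 1) (A.submatrix (Fin.castLE hm) (Fin.castLE hm)) 1 (by omega)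
        ⟨0, one_pos⟩ ⟨0, one_pos⟩ := rfl

noncomputable def dm (n : ℕ) (A : Matrix (Fin n) (Fin n) ℂ) (m : ℕ) : ℂ :=
  if hm : m ≤ n then (A.submatrix (Fin.castLE hm) (Fin.castLE hm)).det else 1

lemma dm_gIdx (n : ℕ) (A : Matrix (Fin n) (Fin n) ℂ) (k : ℕ) :
    dm n A (n - k) = (A.submatrix (gIdx n k) (gIdx n k)).det := by
  rw [dm, dif_pos (Nat.sub_le n k)]
  rfl

lemma pivot_step (n : ℕ) (A : Matrix (Fin n) (Fin n) ℂ) (k : ℕ) (h1 : 0 < k) (hk : k ≤ n)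
    (h : (A.submatrix (gIdx n k) (gIdx n k)).det ≠ 0) :
    dm n A (n - k + 1) = geIter n A k hk ⟨0, h1⟩ ⟨0, h1⟩ * dm n A (n - k) := by
  have hm : n - k + 1 ≤ n := by omega
  set C := A.submatrix (Fin.castLE hm) (Fin.castLE hm) with hC
  have hsub : C.submatrix (gIdx (n - k + 1) 1) (gIdx (n - k + 1) 1) =
      A.submatrix (gIdx n k) (gIdx n k) := rfl
  have h' : (C.submatrix (gIdx (n - k + 1) 1) (gIdx (n - k + 1) 1)).det ≠ 0 := by
    rw [hsub]; exact h
  have hs := schur_det (n - k + 1) 1 (by omega) C h'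
  rw [Matrix.det_fin_one, hsub] at hs
  rw [dm, dif_pos hm, ← hC, ← hs, dm_gIdx, geIter_loc n A k h1 hk hm]
  rfl

lemma abs_det_le_of_entries_le {k : ℕ} (hk : 0 < k) (M : Matrix (Fin k) (Fin k) ℂ)
    {p : ℝ} (hp : 0 ≤ p) (hM : ∀ i j, ‖M i j‖ ≤ p) :
    ‖M.det‖ ≤ (k : ℝ) ^ ((k : ℝ) / 2) * p ^ k := by
  have hG : (M * Mᴴ).PosSemidef := Matrix.posSemidef_self_mul_conjTranspose M
  set μ := hG.1.eigenvalues with hμ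
  have hμ0 : ∀ i, 0 ≤ μ i := hG.eigenvalues_nonneg
  have hkR : (0:ℝ) < (k:ℝ) := by exact_mod_cast hk
  have hprod : ‖M.det‖ ^ 2 = ∏ i, μ i := by
    have h1 : (M * Mᴴ).det = ∏ i, ((μ i : ℝ) : ℂ) := hG.1.det_eq_prod_eigenvalues
    rw [Matrix.det_mul, Matrix.det_conjTranspose, Complex.star_def, Complex.mul_conj,
      ← Complex.ofReal_prod] at h1
    have h2 := Complex.ofReal_inj.mp h1
    rw [← h2, Complex.sq_norm]
  have htr : ((∑ i, μ i : ℝ) : ℂ) = (M * Mᴴ).trace := by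
    rw [hG.1.trace_eq_sum_eigenvalues]
    push_cast
    rfl
  have htr2 : (M * Mᴴ).trace = ((∑ i, ∑ j, ‖M i j‖^2 : ℝ) : ℂ) := by
    rw [Matrix.trace]
    push_cast
    refine Finset.sum_congr rfl fun i _ => ?_
    rw [Matrix.diag_apply, Matrix.mul_apply]
    refine Finset.sum_congr rfl fun j _ => ?_
    rw [Matrix.conjTranspose_apply, Complex.star_def, Complex.mul_conj,
      Complex.normSq_eq_norm_sq]
    push_cast
    rfl
  have hsum : ∑ i, μ i ≤ (k:ℝ) * ((k:ℝ) * p ^ 2) := by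
    have h3 : ∑ i, μ i = ∑ i, ∑ j, ‖M i j‖^2 :=
      Complex.ofReal_inj.mp (htr.trans htr2)
    rw [h3]
    have h4 : ∑ i : Fin k, ∑ j : Fin k, ‖M i j‖^2
        ≤ ∑ _i : Fin k, ∑ _j : Fin k, p ^ 2 :=
      Finset.sum_le_sum fun i _ => Finset.sum_le_sum fun j _ =>
        pow_le_pow_left₀ (norm_nonneg _) (hM i j) 2
    simpa [Finset.sum_const, Finset.card_univ, nsmul_eq_mul, mul_assoc] using h4
  have hamgm : ∏ i, μ i ≤ ((k:ℝ) * p ^ 2) ^ k := by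
    have h3 := Real.geom_mean_le_arith_mean_weighted Finset.univ (fun _ => (k:ℝ)⁻¹) μ
      (fun i _ => by positivity)
      (by simp [Finset.sum_const, Finset.card_univ]; field_simp)
      (fun i _ => hμ0 i)
    have hS0 : (0:ℝ) ≤ ∏ i, μ i ^ ((k:ℝ)⁻¹) :=
      Finset.prod_nonneg fun i _ => Real.rpow_nonneg (hμ0 i) _
    have hSle : ∏ i, μ i ^ ((k:ℝ)⁻¹) ≤ (k:ℝ) * p ^ 2 := by
      refine h3.trans ?_
      rw [← Finset.mul_sum]
      calc (k:ℝ)⁻¹ * ∑ i, μ i ≤ (k:ℝ)⁻¹ * ((k:ℝ) * ((k:ℝ) * p ^ 2)) := by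
            exact mul_le_mul_of_nonneg_left hsum (by positivity)
        _ = (k:ℝ) * p ^ 2 := by field_simp
    have hpow : ∀ i : Fin k, (μ i ^ ((k:ℝ)⁻¹)) ^ k = μ i := by
      intro i
      rw [← Real.rpow_natCast (μ i ^ ((k:ℝ)⁻¹)) k, ← Real.rpow_mul (hμ0 i),
        inv_mul_cancel₀ (ne_of_gt hkR), Real.rpow_one]
    calc ∏ i, μ i = (∏ i, μ i ^ ((k:ℝ)⁻¹)) ^ k := by
          rw [← Finset.prod_pow]
          exact Finset.prod_congr rfl fun i _ => (hpow i).symm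
      _ ≤ ((k:ℝ) * p ^ 2) ^ k := pow_le_pow_left₀ hS0 hSle k
  have h6 : ‖M.det‖ ^ 2 ≤ (k:ℝ) ^ k * (p ^ k) ^ 2 := by
    rw [hprod]
    calc ∏ i, μ i ≤ ((k:ℝ) * p ^ 2) ^ k := hamgm
      _ = (k:ℝ) ^ k * (p ^ k) ^ 2 := by rw [mul_pow, ← pow_mul, ← pow_mul, Nat.mul_comm]
  have h7 : ‖M.det‖ ≤ Real.sqrt ((k:ℝ) ^ k * (p ^ k) ^ 2) := by
    rw [← Real.sqrt_sq (norm_nonneg M.det)]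
    exact Real.sqrt_le_sqrt h6
  refine h7.trans (le_of_eq ?_)
  rw [Real.sqrt_mul (by positivity), Real.sqrt_sq (by positivity)]
  congr 1
  rw [Real.sqrt_eq_rpow, ← Real.rpow_natCast (k:ℝ) k, ← Real.rpow_mul (le_of_lt hkR)]
  norm_num
  ring_nf

lemma entry_le_maxEntry {k : ℕ} (M : Matrix (Fin k) (Fin k) ℂ) (i j : Fin k) :
    ‖M i j‖ ≤ maxEntry M := by
  have h1 : ‖M i j‖ ≤ ⨆ j' : Fin k, ‖M i j'‖ :=
    le_ciSup (f := fun j' => ‖M i j'‖)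
      (Set.Finite.bddAbove (Set.finite_range _)) j
  exact h1.trans (le_ciSup (f := fun i' => ⨆ j' : Fin k, ‖M i' j'‖)
    (Set.Finite.bddAbove (Set.finite_range _)) i)

/-- Wilkinson's constraint: for a completely pivoted nonsingular matrix,
`∏_{i=1}^k p_i ≤ k^{k/2} p_k^k` for every `k = 1, ..., n`. -/
theorem prod_pivot_le_hadamard (n : ℕ) (A : Matrix (Fin n) (Fin n) ℂ)
    (hns : LeadingMinorsNonzero n A) (hcp : CompletelyPivoted n A)
    (k : ℕ) (hk1 : 1 ≤ k) (hkn : k ≤ n) :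
    ∏ i ∈ Finset.Icc 1 k, pivot n A i ≤ (k : ℝ) ^ ((k : ℝ) / 2) * pivot n A k ^ k := by
  have hgne : ∀ j : ℕ, (A.submatrix (gIdx n j) (gIdx n j)).det ≠ 0 :=
    fun j => hns (n - j) (Nat.sub_le n j)
  have tel : ∀ j, j ≤ n → (∏ i ∈ Finset.Icc 1 j, pivot n A i) *
      ‖dm n A (n - j)‖ = ‖dm n A n‖ := by
    intro j
    induction j with
    | zero => intro _; simp
    | succ j ih =>
      intro hj
      have hjn : j ≤ n := by omega
      rw [Finset.prod_Icc_succ_top (Nat.succ_le_succ (Nat.zero_le j))]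
      have hstep := pivot_step n A (j + 1) (Nat.succ_pos j) hj (hgne (j + 1))
      have hp : pivot n A (j + 1) =
          ‖geIter n A (j + 1) hj ⟨0, Nat.succ_pos j⟩ ⟨0, Nat.succ_pos j⟩‖ := by
        rw [pivot, dif_pos (⟨Nat.succ_pos j, hj⟩ : 0 < j + 1 ∧ j + 1 ≤ n)]
      have heq : n - (j + 1) + 1 = n - j := by omega
      rw [heq] at hstep
      calc (∏ i ∈ Finset.Icc 1 j, pivot n A i) * pivot n A (j + 1) *
            ‖dm n A (n - (j + 1))‖
          = (∏ i ∈ Finset.Icc 1 j, pivot n A i) *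
            (pivot n A (j + 1) * ‖dm n A (n - (j + 1))‖) := by ring
        _ = (∏ i ∈ Finset.Icc 1 j, pivot n A i) * ‖dm n A (n - j)‖ := by
            rw [hp, ← norm_mul, ← hstep]
        _ = _ := ih hjn
  have hs := schur_det n k hkn A (hgne k)
  have hdmn : dm n A n = A.det := by
    rw [dm, dif_pos (le_refl n)]
    congr 1
  have habs : ‖dm n A (n - k)‖ ≠ 0 := by
    rw [dm_gIdx]
    simpa using hgne k
  have key : ∏ i ∈ Finset.Icc 1 k, pivot n A i = ‖(geIter n A k hkn).det‖ := by
    have h5 : ‖(geIter n A k hkn).det‖ * ‖dm n A (n - k)‖ =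
        ‖dm n A n‖ := by
      rw [dm_gIdx, ← norm_mul, hs, hdmn]
    exact mul_right_cancel₀ habs ((tel k hkn).trans h5.symm)
  have hmax := hcp k hk1 hkn
  have hpnn : 0 ≤ pivot n A k := by
    rw [pivot]
    split
    · exact norm_nonneg _
    · exact le_refl 0
  have hbound : ∀ i j, ‖geIter n A k hkn i j‖ ≤ pivot n A k := by
    intro i j
    rw [hmax]
    exact entry_le_maxEntry _ i j
  rw [key]
  exact abs_det_le_of_entries_le hk1 (geIter n A k hkn) hpnn hbound
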